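/- Let X be a locally compact metrizable space, let X ⊇ X₁ ⊇ X₂ ⊇ ⋯ be a decreasing sequence of closed subsets with intersection X_∞ = ⋂_m X_m, and let (α_m) be a sequence of Radon measures on X with supp(α_m) ⊆ X_m, converging weak-* to a Radon measure α_∞. Let F̂ : X → ℝ be a bounded function with precompact support such that: (i) whenever x_m → x with x_m ∈ X_m for all m, we have F̂(x_m) → F̂(x); and (ii) F̂ restricted to supp(α_m) is measurable for each m. Then ∫ F̂ dα_m converges to ∫ F̂ dα_∞. -/

import Mathlib

open Filter Topology MeasureTheory Set

/-- The (topological) support of a Borel measure: points all of whose open neighborhoods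
have positive measure. -/
def measureSupport {X : Type*} [TopologicalSpace X] [MeasurableSpace X]
    (μ : Measure X) : Set X :=
  {x : X | ∀ U : Set X, IsOpen U → x ∈ U → 0 < μ U}

theorem isOpen_compl_measureSupport {X : Type*} [TopologicalSpace X] [MeasurableSpace X]
    (μ : Measure X) : IsOpen (measureSupport μ)ᶜ := by
  rw [isOpen_iff_forall_mem_open]
  intro x hx
  simp only [mem_compl_iff, measureSupport, mem_setOf_eq, not_forall] at hx
  obtain ⟨U, hU, hxU, hUz⟩ := hx
  refine ⟨U, fun y hy hmem => (hmem U hU hy).ne' (le_antisymm (not_lt.1 hUz) (zero_le)), hU, hxU⟩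

theorem isClosed_measureSupport {X : Type*} [TopologicalSpace X] [MeasurableSpace X]
    (μ : Measure X) : IsClosed (measureSupport μ) := by
  rw [← compl_compl (measureSupport μ)]; exact (isOpen_compl_measureSupport μ).isClosed_compl

theorem measureSupport_compl_null {X : Type*} [TopologicalSpace X] [MeasurableSpace X]
    {μ : Measure X} (hμ : μ.Regular) : μ (measureSupport μ)ᶜ = 0 := by
  have hopen := isOpen_compl_measureSupport μ
  refine le_antisymm ?_ (zero_le)
  rw [hopen.measure_eq_iSup_isCompact]
  refine iSup_le fun K => iSup_le fun hKsub => iSup_le fun hK => ?_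
  have hU : ∀ x : K, ∃ U : Set X, IsOpen U ∧ (x : X) ∈ U ∧ μ U = 0 := by
    intro ⟨x, hx⟩
    have := hKsub hx
    simp only [mem_compl_iff, measureSupport, mem_setOf_eq, not_forall] at this
    obtain ⟨U, h1, h2, h3⟩ := this
    exact ⟨U, h1, h2, le_antisymm (not_lt.1 h3) (zero_le)⟩
  choose U hUo hUx hUz using hU
  obtain ⟨t, ht⟩ := hK.elim_finite_subcover U hUo (fun x hx => mem_iUnion.2 ⟨⟨x, hx⟩, hUx _⟩)
  calc μ K ≤ μ (⋃ i ∈ t, U i) := measure_mono ht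
    _ ≤ ∑ i ∈ t, μ (U i) := measure_biUnion_finset_le t U
    _ = 0 := by simp [hUz]

/-- If Radon measures `α m` supported in a decreasing sequence of closed sets `Xs m`
converge weak-* to `αlim`, and `F` is a bounded precompactly-supported function which is
continuous along sequences `x_m ∈ Xs m`, and measurable on each support, then the
integrals of `F` converge. -/
theorem integral_tendsto_of_weakstar_and_shrinking_supports
    {X : Type*} [TopologicalSpace X] [LocallyCompactSpace X]
    [TopologicalSpace.MetrizableSpace X] [MeasurableSpace X] [BorelSpace X]
    (Xs : ℕ → Set X) (hXcl : ∀ m, IsClosed (Xs m)) (hXmono : ∀ m, Xs (m + 1) ⊆ Xs m)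
    (α : ℕ → Measure X) (αlim : Measure X)
    (hreg : ∀ m, (α m).Regular) (hregLim : αlim.Regular)
    (hsupp : ∀ m, measureSupport (α m) ⊆ Xs m)
    (hconv : ∀ G : X → ℝ, Continuous G → HasCompactSupport G →
      Tendsto (fun m => ∫ x, G x ∂(α m)) atTop (𝓝 (∫ x, G x ∂αlim)))
    (F : X → ℝ) (hFbdd : ∃ M : ℝ, ∀ x, |F x| ≤ M)
    (hFsupp : IsCompact (closure (Function.support F)))
    (hFseq : ∀ (x : X) (u : ℕ → X), (∀ m, u m ∈ Xs m) → Tendsto u atTop (𝓝 x) →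
      Tendsto (fun m => F (u m)) atTop (𝓝 (F x)))
    (hFmeas : ∀ m, Measurable (fun y : measureSupport (α m) => F (y : X))) :
    Tendsto (fun m => ∫ x, F x ∂(α m)) atTop (𝓝 (∫ x, F x ∂αlim)) := by
  letI : MetricSpace X := TopologicalSpace.metrizableSpaceMetric X
  obtain ⟨M₀, hM₀⟩ := hFbdd
  set M : ℝ := max M₀ 0 with hMdef
  have hM : ∀ x, |F x| ≤ M := fun x => (hM₀ x).trans (le_max_left _ _)
  set S := closure (Function.support F) with hSdef
  set Xinf := ⋂ m, Xs m with hXinfdef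
  have hXinf_cl : IsClosed Xinf := isClosed_iInter hXcl
  have hXanti : Antitone Xs := antitone_nat_of_succ_le hXmono
  have hXinf_sub : ∀ m, Xinf ⊆ Xs m := fun m => iInter_subset _ m
  -- Step 1 : F is continuous on Xinf
  have hFcont : ContinuousOn F Xinf := by
    intro x hx
    rw [ContinuousWithinAt, tendsto_iff_seq_tendsto]
    intro u hu
    have hux : Tendsto u atTop (𝓝 x) := hu.mono_right nhdsWithin_le_nhds
    have hmem : ∀ᶠ k in atTop, u k ∈ Xinf := hu.eventually eventually_mem_nhdsWithin
    obtain ⟨N, hN⟩ := eventually_atTop.1 hmem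
    set v : ℕ → X := fun k => u (max k N) with hvdef
    have hv : ∀ k, v k ∈ Xinf := fun k => hN _ (le_max_right _ _)
    have hvx : Tendsto v atTop (𝓝 x) :=
      hux.comp (tendsto_atTop_mono (fun k => le_max_left k N) tendsto_id)
    have := hFseq x v (fun m => hXinf_sub m (hv m)) hvx
    refine this.congr' ?_
    filter_upwards [eventually_ge_atTop N] with k hk
    show F (v k) = (F ∘ u) k
    simp [hvdef, max_eq_left hk, Function.comp]
  -- Step 2 : Tietze extension and bump function
  obtain ⟨G₀, hG₀⟩ := ContinuousMap.exists_restrict_eq (Y := ℝ) hXinf_cl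
    ⟨Xinf.restrict F, hFcont.restrict⟩
  have hG₀F : ∀ x ∈ Xinf, G₀ x = F x := fun x hx => DFunLike.congr_fun hG₀ ⟨x, hx⟩
  obtain ⟨φ, hφ1, hφ0, hφc, hφmem⟩ :=
    exists_continuous_one_zero_of_isCompact hFsupp isClosed_empty (disjoint_empty _)
  set G : X → ℝ := fun x => φ x * G₀ x with hGdef
  have hGcont : Continuous G := (map_continuous φ).mul (map_continuous G₀)
  have hGsupp : HasCompactSupport G := by
    apply HasCompactSupport.intro' hφc.isCompact hφc.isClosed
    intro x hx
    have : φ x = 0 := image_eq_zero_of_notMem_tsupport hx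
    simp [hGdef, this]
  have hGF : ∀ x ∈ Xinf, G x = F x := by
    intro x hx
    by_cases hxS : x ∈ S
    · simp [hGdef, hG₀F x hx, hφ1 hxS]
    · have hFx : F x = 0 := by
        by_contra h
        exact hxS (subset_closure (Function.mem_support.2 h))
      simp [hGdef, hG₀F x hx, hFx]
  -- Step 3 : αlim is concentrated on Xinf
  haveI : IsFiniteMeasureOnCompacts αlim := hregLim.toIsFiniteMeasureOnCompacts
  haveI : ∀ m, IsFiniteMeasureOnCompacts (α m) := fun m => (hreg m).toIsFiniteMeasureOnCompacts
  have hsuppLim : measureSupport αlim ⊆ Xinf := by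
    rw [hXinfdef, subset_iInter_iff]
    intro m x hx
    by_contra hxm
    obtain ⟨ψ, hψ1, hψ0, hψc, hψmem⟩ :=
      exists_continuous_one_zero_of_isCompact (isCompact_singleton (x := x)) (hXcl m)
        (by simp [hxm])
    have hψnn : 0 ≤ (ψ : X → ℝ) := fun y => (hψmem y).1
    have hψint : Integrable (ψ : X → ℝ) αlim :=
      (map_continuous ψ).integrable_of_hasCompactSupport hψc
    have hz : ∀ k, m ≤ k → ∫ y, ψ y ∂(α k) = 0 := by
      intro k hk
      have hae : (ψ : X → ℝ) =ᵐ[α k] 0 := by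
        rw [Filter.EventuallyEq, ae_iff]
        refine measure_mono_null (fun y hy => ?_) (measureSupport_compl_null (hreg k))
        intro hy2
        have hymem : y ∈ Xs m := hXanti hk (hsupp k hy2)
        exact hy (hψ0 hymem)
      rw [integral_congr_ae hae]; simp
    have hlim0 : Tendsto (fun k => ∫ y, ψ y ∂(α k)) atTop (𝓝 0) := by
      apply Tendsto.congr' _ tendsto_const_nhds
      filter_upwards [eventually_ge_atTop m] with k hk
      exact (hz k hk).symm
    have h0 : ∫ y, ψ y ∂αlim = 0 :=
      tendsto_nhds_unique (hconv ψ (map_continuous ψ) hψc) hlim0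
    have hae0 : (ψ : X → ℝ) =ᵐ[αlim] 0 :=
      (integral_eq_zero_iff_of_nonneg hψnn hψint).mp h0
    have hUopen : IsOpen {y | ψ y ≠ 0} := isOpen_ne_fun (map_continuous ψ) continuous_const
    have hxU : x ∈ {y | ψ y ≠ 0} := by
      have : ψ x = 1 := hψ1 rfl
      simp [this]
    have hpos := hx _ hUopen hxU
    have hnull : αlim {y | ¬ (ψ y = (0 : X → ℝ) y)} = 0 := by
      rw [← ae_iff]; exact hae0
    exact hpos.ne' hnull
  have hαnull : αlim Xinfᶜ = 0 :=
    measure_mono_null (compl_subset_compl.mpr hsuppLim) (measureSupport_compl_null hregLim)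
  have hlimint : ∫ x, F x ∂αlim = ∫ x, G x ∂αlim := by
    apply integral_congr_ae
    rw [Filter.EventuallyEq, ae_iff]
    refine measure_mono_null (fun x hx => ?_) hαnull
    exact fun hxin => hx (hGF x hxin).symm
  -- Step 4 : replace F with a measurable version on each α m
  classical
  set Fm : ℕ → X → ℝ := fun m x =>
    if hx : x ∈ measureSupport (α m) then F x else 0 with hFmdef
  have hsm_meas : ∀ m, MeasurableSet (measureSupport (α m)) :=
    fun m => (isClosed_measureSupport (α m)).measurableSet
  have hFmmeas : ∀ m, Measurable (Fm m) := fun m =>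
    Measurable.dite (hFmeas m) measurable_const (hsm_meas m)
  have hFaeFm : ∀ m, F =ᵐ[α m] Fm m := by
    intro m
    rw [Filter.EventuallyEq, ae_iff]
    refine measure_mono_null (fun x hx => ?_) (measureSupport_compl_null (hreg m))
    intro hxin
    exact hx (by simp [hFmdef, hxin])
  have hFmsupp : ∀ m, Function.support (Fm m) ⊆ S := by
    intro m x hx
    have : F x ≠ 0 := by
      by_contra h
      exact hx (by simp [hFmdef, h])
    exact subset_closure (Function.mem_support.2 this)
  have hFmbdd : ∀ m x, |Fm m x| ≤ M := by
    intro m x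
    by_cases hx : x ∈ measureSupport (α m)
    · simpa [hFmdef, hx] using hM x
    · simp [hFmdef, hx, le_max_right M₀ 0, hMdef]
  have hFmint : ∀ m, Integrable (Fm m) (α m) := by
    intro m
    rw [← integrableOn_iff_integrable_of_support_subset (hFmsupp m)]
    haveI : IsFiniteMeasure ((α m).restrict S) :=
      ⟨by rw [Measure.restrict_apply_univ]; exact hFsupp.measure_lt_top⟩
    refine (integrable_const M).mono' ((hFmmeas m).aestronglyMeasurable) ?_
    exact Eventually.of_forall fun x => by simpa using hFmbdd m x
  -- Step 5 : uniform bound on α m K0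
  set K0 : Set X := S ∪ tsupport G with hK0def
  have hK0cp : IsCompact K0 := hFsupp.union hGsupp
  have hK0meas : MeasurableSet K0 := hK0cp.isClosed.measurableSet
  obtain ⟨ψ0, hψ01, hψ00, hψ0c, hψ0mem⟩ :=
    exists_continuous_one_zero_of_isCompact hK0cp isClosed_empty (disjoint_empty _)
  have hψ0int : ∀ m, Integrable (ψ0 : X → ℝ) (α m) :=
    fun m => (map_continuous ψ0).integrable_of_hasCompactSupport hψ0c
  have hmeasle : ∀ m, ((α m) K0).toReal ≤ ∫ y, ψ0 y ∂(α m) := by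
    intro m
    have hind : Integrable (K0.indicator (fun _ => (1 : ℝ))) (α m) := by
      rw [integrable_indicator_iff hK0meas]
      exact (integrableOn_const_iff enorm_ne_top).2 (Or.inr hK0cp.measure_lt_top)
    calc ((α m) K0).toReal = ∫ y, K0.indicator (fun _ => (1 : ℝ)) y ∂(α m) := by
          rw [integral_indicator_const (1 : ℝ) hK0meas]; simp; rfl
      _ ≤ ∫ y, ψ0 y ∂(α m) := by
          refine integral_mono hind (hψ0int m) fun y => ?_
          by_cases hy : y ∈ K0
          · simp [indicator_of_mem hy, (hψ01 hy : ψ0 y = 1)]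
          · simpa [indicator_of_notMem hy] using (hψ0mem y).1
  obtain ⟨C, hC⟩ := ((hconv ψ0 (map_continuous ψ0) hψ0c).bddAbove_range)
  have hCbound : ∀ m, ((α m) K0).toReal ≤ C :=
    fun m => (hmeasle m).trans (hC (mem_range_self m))
  have hC0 : 0 ≤ C := le_trans ENNReal.toReal_nonneg (hCbound 0)
  -- Step 6 : uniform smallness of F - G on Xs m ∩ K0, eventually in m
  have key : ∀ ε : ℝ, 0 < ε → ∀ᶠ m in atTop, ∀ x ∈ Xs m ∩ K0, |F x - G x| ≤ ε := by
    intro ε hε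
    by_contra hcon
    rw [not_eventually] at hcon
    have hcon' : ∃ᶠ m in atTop, ∃ x, (x ∈ Xs m ∩ K0 ∧ ε < |F x - G x|) := by
      refine hcon.mono fun m hm => ?_
      push_neg at hm
      obtain ⟨x, hx1, hx2⟩ := hm
      exact ⟨x, hx1, hx2⟩
    obtain ⟨θ, hθmono, hθ⟩ := extraction_of_frequently_atTop hcon'
    choose y hy1 hy2 using hθ
    obtain ⟨a, haK, ρ, hρmono, hρ⟩ := hK0cp.tendsto_subseq (fun k => (hy1 k).2)
    set u : ℕ → X := fun k => y (ρ k) with hudef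
    have hu : ∀ k, u k ∈ Xs k := by
      intro k
      exact hXanti ((hρmono.le_apply).trans (hθmono.le_apply)) (hy1 (ρ k)).1
    have hua : Tendsto u atTop (𝓝 a) := hρ
    have haXinf : a ∈ Xinf := by
      rw [hXinfdef, mem_iInter]
      intro m
      refine (hXcl m).mem_of_tendsto hua ?_
      filter_upwards [eventually_ge_atTop m] with k hk
      exact hXanti hk (hu k)
    have hFu : Tendsto (fun k => F (u k)) atTop (𝓝 (F a)) := hFseq a u hu hua
    have hGu : Tendsto (fun k => G (u k)) atTop (𝓝 (F a)) := by
      have := (hGcont.tendsto a).comp hua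
      rwa [hGF a haXinf] at this
    have hdiff : Tendsto (fun k => |F (u k) - G (u k)|) atTop (𝓝 0) := by
      have := (hFu.sub hGu).abs
      simpa using this
    have hev : ∀ᶠ k in atTop, |F (u k) - G (u k)| < ε :=
      hdiff.eventually (gt_mem_nhds hε)
    obtain ⟨k, hk⟩ := hev.exists
    exact absurd (hy2 (ρ k)) (not_lt.2 hk.le)
  -- Step 7 : conclusion
  have hGint : ∀ m, Integrable G (α m) :=
    fun m => hGcont.integrable_of_hasCompactSupport hGsupp
  have hdiff0 : Tendsto (fun m => ∫ x, F x ∂(α m) - ∫ x, G x ∂(α m)) atTop (𝓝 0) := by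
    rw [NormedAddCommGroup.tendsto_nhds_zero]
    intro ε hε
    set δ : ℝ := ε / (2 * (C + 1)) with hδdef
    have hδ : 0 < δ := by positivity
    filter_upwards [key δ hδ] with m hm
    have h1 : ∫ x, F x ∂(α m) = ∫ x, Fm m x ∂(α m) := integral_congr_ae (hFaeFm m)
    have hbound : ∀ᵐ x ∂(α m), ‖Fm m x - G x‖ ≤ K0.indicator (fun _ => δ) x := by
      rw [ae_iff]
      refine measure_mono_null (fun x hx => ?_) (measureSupport_compl_null (hreg m))
      intro hxs
      apply hx
      have hFmx : Fm m x = F x := by simp [hFmdef, hxs]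
      by_cases hxK : x ∈ K0
      · rw [indicator_of_mem hxK, hFmx, Real.norm_eq_abs]
        exact hm x ⟨hsupp m hxs, hxK⟩
      · have hFx : F x = 0 := by
          by_contra h
          exact hxK (Or.inl (subset_closure (Function.mem_support.2 h)))
        have hGx : G x = 0 := image_eq_zero_of_notMem_tsupport (fun h => hxK (Or.inr h))
        simp [indicator_of_notMem hxK, hFmx, hFx, hGx]
    have hindint : Integrable (K0.indicator (fun _ => δ)) (α m) := by
      rw [integrable_indicator_iff hK0meas]
      exact (integrableOn_const_iff enorm_ne_top).2 (Or.inr hK0cp.measure_lt_top)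
    have h2 : ‖∫ x, (Fm m x - G x) ∂(α m)‖ ≤ δ * ((α m) K0).toReal := by
      calc ‖∫ x, (Fm m x - G x) ∂(α m)‖ ≤ ∫ x, K0.indicator (fun _ => δ) x ∂(α m) :=
            norm_integral_le_of_norm_le hindint hbound
        _ = ((α m) K0).toReal * δ := by
            rw [integral_indicator_const δ hK0meas, smul_eq_mul]; rfl
        _ = δ * ((α m) K0).toReal := mul_comm _ _
    rw [h1, ← integral_sub (hFmint m) (hGint m)]
    calc ‖∫ x, (Fm m x - G x) ∂(α m)‖ ≤ δ * ((α m) K0).toReal := h2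
      _ ≤ δ * (C + 1) := by
          refine mul_le_mul_of_nonneg_left ?_ hδ.le
          exact (hCbound m).trans (by linarith)
      _ = ε / 2 := by
          rw [hδdef]
          field_simp
      _ < ε := by linarith
  have hfin := hdiff0.add (hconv G hGcont hGsupp)
  rw [zero_add] at hfin
  rw [hlimint]
  exact hfin.congr fun m => by ring
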